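/- Let n ≥ 1 and s, s' > 0 with s ≠ s'. Then: (a) for every g ∈ L²(ℝ^d, Lebesgue), the function Y ↦ √(φ(s,s',Y))·g(Y) is in L²(ℝ^d) with ∫ φ(s,s',Y)|g(Y)|² dY ≤ ((s+s')/(2√(s·s')))^n ∫ |g(Y)|² dY; and (b) there exists g ∈ L²(ℝ^d) with ∫ |g|² dY > 0 and ∫ φ(s,s',Y)|g(Y)|² dY ≠ ∫ |g(Y)|² dY. (This is the content of Theorem 2.4: in the unitary trivializations f ↦ (f/√|Ω_t|)√Ω_t, the prequantum BKS pairing map B^{prQ}_{ss'} is multiplication by √φ, hence bounded but not an isometry, so it differs from the parallel transport of δ^{prQ}, which is the identity in these trivializations.) -/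

import Mathlib

open scoped Real BigOperators
open MeasureTheory

/-- `sinhc x = sinh x / x` for `x ≠ 0`, and `sinhc 0 = 1`. -/
noncomputable def sinhc (x : ℝ) : ℝ := if x = 0 then 1 else Real.sinh x / x

lemma sinhc_zero : sinhc 0 = 1 := by simp [sinhc]

lemma sinhc_of_ne (x : ℝ) (hx : x ≠ 0) : sinhc x = Real.sinh x / x := by simp [sinhc, hx]

lemma sinhc_neg (x : ℝ) : sinhc (-x) = sinhc x := by
  rcases eq_or_ne x 0 with rfl | hx
  · simp
  · rw [sinhc_of_ne _ hx, sinhc_of_ne _ (neg_ne_zero.mpr hx), Real.sinh_neg, neg_div_neg_eq]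

lemma one_le_sinhc (x : ℝ) : 1 ≤ sinhc x := by
  have h : ∀ y : ℝ, 0 < y → 1 ≤ sinhc y := by
    intro y hy
    rw [sinhc_of_ne _ hy.ne', le_div_iff₀ hy, one_mul]
    exact Real.self_le_sinh_iff.mpr hy.le
  rcases lt_trichotomy x 0 with hx | rfl | hx
  · rw [← sinhc_neg]; exact h _ (by linarith)
  · simp [sinhc]
  · exact h _ hx

lemma sinhc_pos (x : ℝ) : 0 < sinhc x := lt_of_lt_of_le one_pos (one_le_sinhc x)

lemma sinhc_le_exp_abs (x : ℝ) : sinhc x ≤ Real.exp |x| := by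
  have h : ∀ y : ℝ, 0 < y → sinhc y ≤ Real.exp y := by
    intro y hy
    rw [sinhc_of_ne _ hy.ne', div_le_iff₀ hy]
    have h1 : Real.exp (-y) = Real.exp y * Real.exp (-2 * y) := by
      rw [← Real.exp_add]; ring_nf
    have h2 := Real.add_one_le_exp (-2 * y)
    have h3 := (Real.exp_pos y).le
    rw [Real.sinh_eq]
    nlinarith
  rcases lt_trichotomy x 0 with hx | rfl | hx
  · rw [← sinhc_neg, abs_of_neg hx]; exact h _ (by linarith)
  · simp [sinhc]
  · rw [abs_of_pos hx]; exact h _ hx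

lemma sinh_le_mul_cosh {x : ℝ} (hx : 0 ≤ x) : Real.sinh x ≤ x * Real.cosh x := by
  set f : ℝ → ℝ := fun y => y * Real.cosh y - Real.sinh y with hf
  have hderiv : ∀ y : ℝ, HasDerivAt f (y * Real.sinh y) y := by
    intro y
    have h1 := ((hasDerivAt_id y).mul (Real.hasDerivAt_cosh y)).sub (Real.hasDerivAt_sinh y)
    exact h1.congr_deriv (by simp only [id_eq]; ring)
  have hmono : Monotone f := by
    apply monotone_of_deriv_nonneg
    · exact fun y => (hderiv y).differentiableAt
    · intro y
      rw [(hderiv y).deriv]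
      rcases le_total 0 y with hy | hy
      · exact mul_nonneg hy (Real.sinh_nonneg_iff.mpr hy)
      · nlinarith [Real.sinh_nonpos_iff.mpr hy]
  have := hmono hx
  simp only [hf] at this
  simp only [Real.cosh_zero, Real.sinh_zero, mul_one, zero_mul, sub_zero] at this
  linarith [this]

lemma sinh_div_mono {u v : ℝ} (hu : 0 < u) (huv : u ≤ v) :
    Real.sinh u / u ≤ Real.sinh v / v := by
  have hmono : MonotoneOn (fun y => Real.sinh y / y) (Set.Ioi (0 : ℝ)) := by
    apply monotoneOn_of_deriv_nonneg (convex_Ioi 0)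
    · exact Real.continuous_sinh.continuousOn.div continuousOn_id
        (fun y hy => ne_of_gt hy)
    · intro y hy
      rw [interior_Ioi] at hy
      exact (((Real.hasDerivAt_sinh y).div (hasDerivAt_id y) (ne_of_gt hy)).differentiableAt).differentiableWithinAt
    · intro y hy
      rw [interior_Ioi] at hy
      have hd : HasDerivAt (fun z => Real.sinh z / z)
          ((Real.cosh y * y - Real.sinh y * 1) / y ^ 2) y := by
        exact (Real.hasDerivAt_sinh y).div (hasDerivAt_id y) (ne_of_gt hy)
      rw [hd.deriv]
      have := sinh_le_mul_cosh hy.le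
      apply div_nonneg _ (pow_pos hy 2).le
      nlinarith
  exact hmono (Set.mem_Ioi.mpr hu) (Set.mem_Ioi.mpr (lt_of_lt_of_le hu huv)) huv

lemma cosh_sub_one (x : ℝ) : Real.cosh x - 1 = 2 * Real.sinh (x / 2) ^ 2 := by
  have h : x = 2 * (x / 2) := by ring
  rw [h, Real.cosh_two_mul, Real.cosh_sq]
  ring_nf

lemma key_ineq {a b : ℝ} (ha : 0 < a) (hb : 0 < b) :
    sinhc ((a + b) / 2) ^ 2 ≤ sinhc a * sinhc b := by
  set m := (a + b) / 2 with hm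
  have hmpos : 0 < m := by rw [hm]; linarith
  rw [sinhc_of_ne _ hmpos.ne', sinhc_of_ne _ ha.ne', sinhc_of_ne _ hb.ne']
  rw [div_pow, div_mul_div_comm, div_le_div_iff₀ (by positivity) (by positivity)]
  -- goal: sinh m ^ 2 * (a * b) ≤ sinh a * sinh b * m ^ 2
  have hcore : (a + b) ^ 2 * (Real.cosh (a - b) - 1) ≤ (a - b) ^ 2 * (Real.cosh (a + b) - 1) := by
    rcases eq_or_ne a b with rfl | hab
    · simp
    · have hD : (0:ℝ) < |a - b| := abs_pos.mpr (sub_ne_zero.mpr hab)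
      have hDle : |a - b| ≤ a + b := by
        rw [abs_le]; constructor <;> linarith
      have hmono := sinh_div_mono (by linarith : (0:ℝ) < |a - b| / 2)
        (by linarith : |a - b| / 2 ≤ (a + b) / 2)
      have h1 : 0 ≤ Real.sinh (|a - b| / 2) :=
        Real.sinh_nonneg_iff.mpr (by positivity)
      have h2 : 0 ≤ Real.sinh ((a + b) / 2) := Real.sinh_nonneg_iff.mpr (by linarith)
      have hsq : Real.sinh (|a - b| / 2) ^ 2 * ((a + b) / 2) ^ 2 ≤
          Real.sinh ((a + b) / 2) ^ 2 * (|a - b| / 2) ^ 2 := by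
        rw [div_le_div_iff₀ (by positivity) (by positivity)] at hmono
        have h := pow_le_pow_left₀ (mul_nonneg h1 (by positivity : (0:ℝ) ≤ (a + b) / 2)) hmono 2
        rw [mul_pow, mul_pow] at h
        exact h
      have e1 : Real.cosh (a - b) - 1 = 2 * Real.sinh (|a - b| / 2) ^ 2 := by
        rw [← Real.cosh_abs (a - b), cosh_sub_one]
      have e2 : Real.cosh (a + b) - 1 = 2 * Real.sinh ((a + b) / 2) ^ 2 := cosh_sub_one _
      have e3 : (a - b) ^ 2 = |a - b| ^ 2 := (sq_abs _).symm
      rw [e1, e2, e3]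
      nlinarith
  have hsab : Real.sinh a * Real.sinh b = (Real.cosh (a + b) - Real.cosh (a - b)) / 2 := by
    rw [Real.cosh_add, Real.cosh_sub]; ring
  have hsm : Real.sinh m ^ 2 = (Real.cosh (a + b) - 1) / 2 := by
    have h : a + b = 2 * m := by rw [hm]; ring
    rw [h, Real.cosh_two_mul, Real.cosh_sq]; ring
  have hmsq : m ^ 2 = (a + b) ^ 2 / 4 := by rw [hm]; ring
  have hab4 : a * b = ((a + b) ^ 2 - (a - b) ^ 2) / 4 := by ring
  rw [hsab, hsm, hmsq, hab4]
  nlinarith [hcore]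

lemma key_ineq' {s s' : ℝ} (hs : 0 < s) (hs' : 0 < s') (t : ℝ) :
    sinhc ((s + s') / 2 * t) ^ 2 ≤ sinhc (s * t) * sinhc (s' * t) := by
  rcases eq_or_ne t 0 with rfl | ht
  · simp [sinhc]
  · have habs : ∀ c : ℝ, sinhc (c * t) = sinhc (c * |t|) := by
      intro c
      rcases abs_cases t with ⟨h1, _⟩ | ⟨h1, _⟩
      · rw [h1]
      · rw [h1, mul_neg, sinhc_neg]
    rw [habs, habs s, habs s']
    have htpos : 0 < |t| := abs_pos.mpr ht
    have h := key_ineq (mul_pos hs htpos) (mul_pos hs' htpos)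
    have : (s * |t| + s' * |t|) / 2 = (s + s') / 2 * |t| := by ring
    rwa [this] at h

/-- The function `η(Y) = ∏_{i ∈ I} sinhc (α_i Y)` (equation (5) of the paper). -/
noncomputable def eta {d : ℕ} {I : Type*} [Fintype I]
    (α : I → (EuclideanSpace ℝ (Fin d) →ₗ[ℝ] ℝ)) (Y : EuclideanSpace ℝ (Fin d)) : ℝ :=
  ∏ i, sinhc (α i Y)

/-- The function `φ(s,s',Y)` of equation (13) of the paper, with `n = dim K`. -/
noncomputable def phi {d : ℕ} {I : Type*} [Fintype I]
    (α : I → (EuclideanSpace ℝ (Fin d) →ₗ[ℝ] ℝ)) (n : ℕ) (s s' : ℝ)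
    (Y : EuclideanSpace ℝ (Fin d)) : ℝ :=
  ((s + s') / (2 * Real.sqrt (s * s'))) ^ n * (eta α (((s + s') / 2) • Y)) ^ 2 /
    (eta α (s • Y) * eta α (s' • Y))

lemma eta_pos {d : ℕ} {I : Type*} [Fintype I]
    (α : I → (EuclideanSpace ℝ (Fin d) →ₗ[ℝ] ℝ)) (Y : EuclideanSpace ℝ (Fin d)) :
    0 < eta α Y :=
  Finset.prod_pos fun i _ => sinhc_pos _

lemma one_le_eta {d : ℕ} {I : Type*} [Fintype I]
    (α : I → (EuclideanSpace ℝ (Fin d) →ₗ[ℝ] ℝ)) (Y : EuclideanSpace ℝ (Fin d)) :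
    1 ≤ eta α Y := by
  unfold eta
  calc (1:ℝ) = ∏ _i : I, 1 := by simp
    _ ≤ ∏ i, sinhc (α i Y) :=
        Finset.prod_le_prod (fun i _ => zero_le_one) (fun i _ => one_le_sinhc _)

lemma measurable_sinhc : Measurable sinhc := by
  unfold sinhc
  exact Measurable.ite (measurableSet_eq) measurable_const
    (Real.continuous_sinh.measurable.div measurable_id)

/-- Theorem 2.4: in the unitary trivializations, the prequantum BKS pairing map
`B^{prQ}_{ss'}` is multiplication by `√φ`, hence bounded but not an isometry.
(a) multiplication by `√φ` maps `L²` into `L²` with the stated norm bound;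
(b) it is not an isometry. -/
theorem statement_2 {d : ℕ} (hd : 1 ≤ d) {I : Type*} [Fintype I]
    (α : I → (EuclideanSpace ℝ (Fin d) →ₗ[ℝ] ℝ)) {n : ℕ} (hn : 1 ≤ n)
    {s s' : ℝ} (hs : 0 < s) (hs' : 0 < s') (hne : s ≠ s') :
    (∀ g : EuclideanSpace ℝ (Fin d) → ℂ, MemLp g 2 volume →
      MemLp (fun Y => (Real.sqrt (phi α n s s' Y) : ℂ) * g Y) 2 volume ∧
      (∫ Y, phi α n s s' Y * ‖g Y‖ ^ 2) ≤
        ((s + s') / (2 * Real.sqrt (s * s'))) ^ n * ∫ Y, ‖g Y‖ ^ 2) ∧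
    ∃ g : EuclideanSpace ℝ (Fin d) → ℂ, MemLp g 2 volume ∧
      0 < (∫ Y, ‖g Y‖ ^ 2) ∧
      (∫ Y, phi α n s s' Y * ‖g Y‖ ^ 2) ≠ ∫ Y, ‖g Y‖ ^ 2 := by
  set C : ℝ := ((s + s') / (2 * Real.sqrt (s * s'))) ^ n with hCdef
  -- `C > 1`
  have hsqrt : 0 < Real.sqrt (s * s') := Real.sqrt_pos.mpr (mul_pos hs hs')
  have hbase : 1 < (s + s') / (2 * Real.sqrt (s * s')) := by
    rw [lt_div_iff₀ (by positivity)]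
    have h4 : (2 * Real.sqrt (s * s')) ^ 2 = 4 * (s * s') := by
      rw [mul_pow, Real.sq_sqrt (by positivity)]; ring
    have h5 : s - s' ≠ 0 := sub_ne_zero.mpr hne
    have h6 : 0 < (s - s') ^ 2 := (pow_pos (abs_pos.mpr h5) 2).trans_le (by rw [sq_abs])
    nlinarith [hsqrt]
  have hC1 : 1 < C := by
    rw [hCdef]
    exact one_lt_pow₀ hbase (by omega)
  have hC0 : 0 < C := lt_trans one_pos hC1
  -- basic rewriting of `eta` under scaling
  have hetaS : ∀ (c : ℝ) (Y : EuclideanSpace ℝ (Fin d)), eta α (c • Y) = ∏ i, sinhc (c * α i Y) := by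
    intro c Y
    unfold eta
    exact Finset.prod_congr rfl fun i _ => by rw [LinearMap.map_smul, smul_eq_mul]
  -- pointwise bounds on phi
  have phi_le : ∀ Y : EuclideanSpace ℝ (Fin d), phi α n s s' Y ≤ C := by
    intro Y
    have hden : 0 < eta α (s • Y) * eta α (s' • Y) := mul_pos (eta_pos α _) (eta_pos α _)
    rw [phi, div_le_iff₀ hden]
    have hnum : eta α (((s + s') / 2) • Y) ^ 2 ≤ eta α (s • Y) * eta α (s' • Y) := by
      rw [hetaS, hetaS, hetaS, ← Finset.prod_mul_distrib, ← Finset.prod_pow]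
      exact Finset.prod_le_prod (fun i _ => sq_nonneg _) fun i _ => key_ineq' hs hs' (α i Y)
    exact mul_le_mul_of_nonneg_left hnum hC0.le
  have phi_nonneg : ∀ Y : EuclideanSpace ℝ (Fin d), 0 ≤ phi α n s s' Y := by
    intro Y
    exact div_nonneg (mul_nonneg hC0.le (sq_nonneg _))
      (mul_pos (eta_pos α _) (eta_pos α _)).le
  -- measurability of phi
  have hacont : ∀ i, Continuous (α i) := fun i => (α i).continuous_of_finiteDimensional
  have hmeta : ∀ c : ℝ, Measurable (fun Y : EuclideanSpace ℝ (Fin d) => eta α (c • Y)) := by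
    intro c
    simp only [eta]
    apply Finset.measurable_prod
    intro i _
    exact measurable_sinhc.comp ((hacont i).comp (continuous_const_smul c)).measurable
  have hmphi : Measurable (phi α n s s') := by
    have h : phi α n s s' = fun Y : EuclideanSpace ℝ (Fin d) =>
        ((s + s') / (2 * Real.sqrt (s * s'))) ^ n * eta α (((s + s') / 2) • Y) ^ 2 /
          (eta α (s • Y) * eta α (s' • Y)) := rfl
    rw [h]
    exact (measurable_const.mul ((hmeta _).pow_const 2)).div ((hmeta s).mul (hmeta s'))
  constructor
  · -- part (a)
    intro g hg
    have hFm : AEStronglyMeasurable (fun Y : EuclideanSpace ℝ (Fin d) => (Real.sqrt (phi α n s s' Y) : ℂ) * g Y) volume :=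
      ((Complex.measurable_ofReal.comp
        (Real.continuous_sqrt.measurable.comp hmphi)).aestronglyMeasurable).mul hg.1
    constructor
    · apply MemLp.of_le (hg.const_mul (Real.sqrt C : ℂ)) hFm
      filter_upwards with Y
      rw [norm_mul, norm_mul, Complex.norm_real, Complex.norm_real, Real.norm_eq_abs,
        Real.norm_eq_abs, abs_of_nonneg (Real.sqrt_nonneg _), abs_of_nonneg (Real.sqrt_nonneg _)]
      exact mul_le_mul_of_nonneg_right (Real.sqrt_le_sqrt (phi_le Y)) (norm_nonneg _)
    · have hInt2 : Integrable (fun Y : EuclideanSpace ℝ (Fin d) => ‖g Y‖ ^ 2) volume := hg.norm.integrable_sq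
      have hIntphi : Integrable (fun Y : EuclideanSpace ℝ (Fin d) => phi α n s s' Y * ‖g Y‖ ^ 2) volume := by
        apply Integrable.mono (hInt2.const_mul C)
          (hmphi.aestronglyMeasurable.mul hInt2.aestronglyMeasurable)
        filter_upwards with Y
        simp only [Pi.mul_apply]
        rw [Real.norm_eq_abs, Real.norm_eq_abs,
          abs_of_nonneg (mul_nonneg (phi_nonneg Y) (sq_nonneg _)),
          abs_of_nonneg (mul_nonneg hC0.le (sq_nonneg _))]
        exact mul_le_mul_of_nonneg_right (phi_le Y) (sq_nonneg _)
      calc (∫ Y, phi α n s s' Y * ‖g Y‖ ^ 2) ≤ ∫ Y, C * ‖g Y‖ ^ 2 :=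
            integral_mono hIntphi (hInt2.const_mul C) fun Y =>
              mul_le_mul_of_nonneg_right (phi_le Y) (sq_nonneg _)
        _ = C * ∫ Y, ‖g Y‖ ^ 2 := integral_const_mul C _
  · -- part (b)
    set c : ℝ := (1 + C) / 2 with hcdef
    have hc1 : 1 < c := by rw [hcdef]; linarith
    have hcC : c < C := by rw [hcdef]; linarith
    have hc0 : 0 < c := lt_trans one_pos hc1
    set ψ : EuclideanSpace ℝ (Fin d) → ℝ := fun Y => ∏ i, Real.exp (s * |α i Y|) * Real.exp (s' * |α i Y|) with hψdef
    have hψcont : Continuous ψ := by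
      apply continuous_finset_prod
      intro i _
      exact (Real.continuous_exp.comp (continuous_const.mul (hacont i).abs)).mul
        (Real.continuous_exp.comp (continuous_const.mul (hacont i).abs))
    have hψpos : ∀ Y : EuclideanSpace ℝ (Fin d), 0 < ψ Y :=
      fun Y => Finset.prod_pos fun i _ => mul_pos (Real.exp_pos _) (Real.exp_pos _)
    have hψ0 : ψ 0 = 1 := by
      rw [hψdef]
      simp
    have hlow : ∀ Y : EuclideanSpace ℝ (Fin d), C / ψ Y ≤ phi α n s s' Y := by
      intro Y
      have hdenpos : 0 < eta α (s • Y) * eta α (s' • Y) := mul_pos (eta_pos α _) (eta_pos α _)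
      have hdenψ : eta α (s • Y) * eta α (s' • Y) ≤ ψ Y := by
        rw [hetaS, hetaS, hψdef, ← Finset.prod_mul_distrib]
        apply Finset.prod_le_prod (fun i _ => (mul_pos (sinhc_pos _) (sinhc_pos _)).le)
        intro i _
        have h1 : sinhc (s * α i Y) ≤ Real.exp (s * |α i Y|) := by
          have := sinhc_le_exp_abs (s * α i Y)
          rwa [abs_mul, abs_of_pos hs] at this
        have h2 : sinhc (s' * α i Y) ≤ Real.exp (s' * |α i Y|) := by
          have := sinhc_le_exp_abs (s' * α i Y)
          rwa [abs_mul, abs_of_pos hs'] at this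
        exact mul_le_mul h1 h2 (sinhc_pos _).le (Real.exp_pos _).le
      have hnum1 : 1 ≤ eta α (((s + s') / 2) • Y) ^ 2 := by
        have h := one_le_eta α (((s + s') / 2) • Y)
        nlinarith
      rw [phi]
      exact div_le_div₀ (mul_nonneg hC0.le (sq_nonneg _))
        (le_mul_of_one_le_right hC0.le hnum1) hdenpos hdenψ
    set U : Set (EuclideanSpace ℝ (Fin d)) := ψ ⁻¹' (Set.Iio c) ∩ Metric.ball (0 : EuclideanSpace ℝ (Fin d)) 1 with hUdef
    have hUopen : IsOpen U := (isOpen_Iio.preimage hψcont).inter Metric.isOpen_ball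
    have h0U : (0 : EuclideanSpace ℝ (Fin d)) ∈ U := by
      constructor
      · simp only [Set.mem_preimage, Set.mem_Iio, hψ0]; exact hc1
      · exact Metric.mem_ball_self one_pos
    have hUm : MeasurableSet U := hUopen.measurableSet
    have hvolpos : 0 < volume U := hUopen.measure_pos _ ⟨0, h0U⟩
    have hvolfin : volume U < ⊤ :=
      lt_of_le_of_lt (measure_mono Set.inter_subset_right) measure_ball_lt_top
    have hnormsq : (fun Y : EuclideanSpace ℝ (Fin d) =>
        ‖Set.indicator U (fun _ => (1 : ℂ)) Y‖ ^ 2) =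
        Set.indicator U (fun _ => (1 : ℝ)) := by
      funext Y
      by_cases hY : Y ∈ U
      · simp [Set.indicator_of_mem hY]
      · simp [Set.indicator_of_notMem hY]
    have hI1 : (∫ Y, ‖Set.indicator U (fun _ => (1 : ℂ)) Y‖ ^ 2) = (volume U).toReal := by
      rw [hnormsq, integral_indicator_const (1 : ℝ) hUm, smul_eq_mul, mul_one]; rfl
    refine ⟨Set.indicator U (fun _ => (1 : ℂ)),
      memLp_indicator_const 2 hUm 1 (Or.inr hvolfin.ne), ?_, ?_⟩
    · rw [hI1]
      exact ENNReal.toReal_pos hvolpos.ne' hvolfin.ne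
    · have hphiU : (fun Y : EuclideanSpace ℝ (Fin d) =>
          phi α n s s' Y * ‖Set.indicator U (fun _ => (1 : ℂ)) Y‖ ^ 2) =
          Set.indicator U (phi α n s s') := by
        funext Y
        by_cases hY : Y ∈ U
        · simp [Set.indicator_of_mem hY]
        · simp [Set.indicator_of_notMem hY]
      have hconst : IntegrableOn (fun _ : EuclideanSpace ℝ (Fin d) => C / c) U volume :=
        (integrableOn_const_iff).mpr (Or.inr hvolfin)
      have hIntU : IntegrableOn (phi α n s s') U volume := by
        apply Integrable.mono
          ((integrableOn_const_iff).mpr (Or.inr hvolfin) :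
            IntegrableOn (fun _ : EuclideanSpace ℝ (Fin d) => C) U volume)
          hmphi.aestronglyMeasurable.restrict
        filter_upwards with Y
        rw [Real.norm_eq_abs, Real.norm_eq_abs, abs_of_nonneg (phi_nonneg Y)]
        exact le_trans (phi_le Y) (le_abs_self C)
      have hlowU : (C / c) * (volume U).toReal ≤ ∫ Y in U, phi α n s s' Y := by
        have hm := setIntegral_mono_on hconst hIntU hUm (fun Y hY =>
          le_trans (div_le_div_of_nonneg_left hC0.le (hψpos Y) (le_of_lt hY.1)) (hlow Y))
        rw [setIntegral_const, smul_eq_mul, mul_comm] at hm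
        exact hm
      apply ne_of_gt
      rw [hI1, hphiU, integral_indicator hUm]
      calc (volume U).toReal < (C / c) * (volume U).toReal := by
            have h1 : 1 < C / c := (one_lt_div hc0).mpr hcC
            have h2 : 0 < (volume U).toReal := ENNReal.toReal_pos hvolpos.ne' hvolfin.ne
            nlinarith
        _ ≤ ∫ Y in U, phi α n s s' Y := hlowU
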